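/- Let Kₙ be the complete graph, r_BN its Baker-Norine rank, and 𝒜 = {a ∈ ℤ^n : a₁,…,a_{n-2} ∈ {0,…,n-1}, a_{n-1}=0}. For a ∈ 𝒜 with deg(a) = i: a₁+⋯+a_{n-2} ≤ i if and only if r_BN(a) = r_BN(a - e_{n-1}) + 1. -/

import Mathlib

open scoped BigOperators

/-- degree of a divisor -/
def deg {n : ℕ} (d : Fin n → ℤ) : ℤ := ∑ i, d i

/-- initially zero: vanishes for all sufficiently small degree -/
def InitiallyZero {n : ℕ} (f : (Fin n → ℤ) → ℤ) : Prop :=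
  ∃ a : ℤ, ∀ d, deg d ≤ a → f d = 0

/-- indicator vector of a finite set of coordinates -/
def eI {n : ℕ} (I : Finset (Fin n)) : Fin n → ℤ := fun i => if i ∈ I then 1 else 0

/-- standard basis vector -/
def stdB {n : ℕ} (i : Fin n) : Fin n → ℤ := fun j => if j = i then 1 else 0

/-- the Möbius operator 𝔪 -/
def mob {n : ℕ} (f : (Fin n → ℤ) → ℤ) : (Fin n → ℤ) → ℤ :=
  fun d => ∑ I : Finset (Fin n), (-1) ^ I.card * f (d - eI I)

/-- a modular function -/
def Modular {n : ℕ} (h : (Fin n → ℤ) → ℤ) : Prop := ∀ d, mob h d = 0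

/-- L¹ distance (as a natural number) from `d` to the set `N` -/
noncomputable def distTo {n : ℕ} (N : Set (Fin n → ℤ)) (d : Fin n → ℤ) : ℕ :=
  sInf {k : ℕ | ∃ d' ∈ N, ∑ i, (d i - d' i).natAbs = k}

/-- equivalence modulo the image of the Laplacian of the complete graph Kₙ:
the Laplacian sends `x` to `fun i => n * x i - ∑ j, x j`. -/
def lapEquiv (n : ℕ) (d d' : Fin n → ℤ) : Prop :=
  ∃ x : Fin n → ℤ, ∀ i, d i - d' i = (n : ℤ) * x i - ∑ j, x j

/-- divisors of Kₙ not equivalent to an effective divisor -/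
def NKn (n : ℕ) : Set (Fin n → ℤ) :=
  {d | ¬ ∃ d' : Fin n → ℤ, (∀ i, 0 ≤ d' i) ∧ lapEquiv n d d'}

/-- the Baker–Norine rank of the complete graph Kₙ -/
noncomputable def rBN (n : ℕ) (d : Fin n → ℤ) : ℤ :=
  (distTo (NKn n) d : ℤ) - 1

namespace S18

variable {n : ℕ}

/-- the characterizing predicate for membership in `NKn n` -/
def P (n : ℕ) (d : Fin n → ℤ) : Prop := ∀ c : ℤ, deg d < ∑ i, (d i - c) % (n:ℤ)

lemma sub_emod_congr (c c' : ℤ) (hd : (n:ℤ) ∣ c - c') (x : ℤ) :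
    (x - c) % (n:ℤ) = (x - c') % (n:ℤ) := by
  obtain ⟨k, hk⟩ := hd
  have : x - c = x - c' + (n:ℤ) * (-k) := by linarith
  rw [this, Int.add_mul_emod_self_left]

lemma bump (hn1 : 1 < (n:ℤ)) (y : ℤ) :
    y % (n:ℤ) - (y - 1) % (n:ℤ) = 1 - (if (n:ℤ) ∣ y then (n:ℤ) else 0) := by
  have hn0 : (n:ℤ) ≠ 0 := by linarith
  by_cases h : (n:ℤ) ∣ y
  · have h1 : y % (n:ℤ) = 0 := Int.emod_eq_zero_of_dvd h
    have h2 : (y - 1) % (n:ℤ) = (n:ℤ) - 1 := by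
      rw [Int.sub_emod, h1]
      have : ((1:ℤ)) % n = 1 := Int.emod_eq_of_lt (by norm_num) hn1
      rw [this]
      have : (0 - 1 : ℤ) = ((n:ℤ) - 1) + (n:ℤ) * (-1) := by ring
      rw [this, Int.add_mul_emod_self_left]
      exact Int.emod_eq_of_lt (by linarith) (by linarith)
    rw [h1, h2]; simp [h]
  · have h1 : y % (n:ℤ) ≠ 0 := fun hc => h (Int.dvd_of_emod_eq_zero hc)
    have h2 : 0 ≤ y % (n:ℤ) := Int.emod_nonneg y hn0
    have h3 : y % (n:ℤ) < n := Int.emod_lt_of_pos y (by linarith)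
    have h4 : (y - 1) % (n:ℤ) = y % (n:ℤ) - 1 := by
      rw [Int.sub_emod]
      have : ((1:ℤ)) % n = 1 := Int.emod_eq_of_lt (by norm_num) hn1
      rw [this]
      exact Int.emod_eq_of_lt (by omega) (by omega)
    rw [h4]; simp [h]

lemma g_mono (hn : 0 < n) {p q : Fin n → ℤ} (h : ∀ i, q i ≤ p i) (c : ℤ) :
    (∑ i, (p i - c) % (n:ℤ)) - deg p ≤ (∑ i, (q i - c) % (n:ℤ)) - deg q := by
  have hn' : (0:ℤ) < n := by exact_mod_cast hn
  have key : ∀ i, (p i - c) % (n:ℤ) - p i ≤ (q i - c) % (n:ℤ) - q i := by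
    intro i
    have hdiv : (q i - c) / (n:ℤ) ≤ (p i - c) / (n:ℤ) :=
      Int.ediv_le_ediv hn' (by linarith [h i])
    have e1 : (p i - c) % (n:ℤ) = (p i - c) - (n:ℤ) * ((p i - c)/(n:ℤ)) := Int.emod_def _ _
    have e2 : (q i - c) % (n:ℤ) = (q i - c) - (n:ℤ) * ((q i - c)/(n:ℤ)) := Int.emod_def _ _
    nlinarith
  calc (∑ i, (p i - c) % (n:ℤ)) - deg p = ∑ i, ((p i - c) % (n:ℤ) - p i) := by
        rw [Finset.sum_sub_distrib]; rfl
    _ ≤ ∑ i, ((q i - c) % (n:ℤ) - q i) := Finset.sum_le_sum (fun i _ => key i)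
    _ = (∑ i, (q i - c) % (n:ℤ)) - deg q := by rw [Finset.sum_sub_distrib]; rfl

lemma P_mono (hn : 0 < n) {p q : Fin n → ℤ} (h : ∀ i, q i ≤ p i) (hp : P n p) : P n q := by
  intro c
  have := g_mono hn h c
  have := hp c
  linarith

/-- key arithmetic sub-lemma for constructing Laplacian preimages -/
lemma lap_witness (hn : 0 < n) (v : Fin n → ℤ) (c : ℤ) (hsum : ∑ i, v i = 0)
    (hdvd : ∀ i, (n:ℤ) ∣ (v i - c)) : ∃ x : Fin n → ℤ, ∀ i, v i = (n:ℤ) * x i - ∑ j, x j := by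
  have hn0 : (n:ℤ) ≠ 0 := by exact_mod_cast hn.ne'
  refine ⟨fun i => (v i - c) / (n:ℤ), fun i => ?_⟩
  have hxi : ∀ j, (n:ℤ) * ((v j - c) / (n:ℤ)) = v j - c := fun j => Int.mul_ediv_cancel' (hdvd j)
  have hS : (n:ℤ) * (∑ j, (v j - c) / (n:ℤ)) = ∑ j, (v j - c) := by
    rw [Finset.mul_sum]; exact Finset.sum_congr rfl (fun j _ => hxi j)
  have h2 : ∑ j, (v j - c) = - (n:ℤ) * c := by
    rw [Finset.sum_sub_distrib, hsum, Finset.sum_const, Finset.card_univ, Fintype.card_fin]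
    push_cast; ring
  have h3 : ∑ j, (v j - c) / (n:ℤ) = -c := by
    have := hS.trans h2
    have : (n:ℤ) * (∑ j, (v j - c) / (n:ℤ)) = (n:ℤ) * (-c) := by linarith
    exact mul_left_cancel₀ hn0 this
  rw [h3, hxi i]; ring

lemma mem_NKn (hn : 0 < n) (d : Fin n → ℤ) : d ∈ NKn n ↔ P n d := by
  have hn' : (0:ℤ) < n := by exact_mod_cast hn
  have hn0 : (n:ℤ) ≠ 0 := by linarith
  constructor
  · intro hd c
    by_contra hcon
    push_neg at hcon   -- ∑ ... ≤ deg d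
    apply hd
    set r : Fin n → ℤ := fun i => (d i - c) % (n:ℤ) with hr
    set K : ℤ := deg d - ∑ i, r i with hK
    have hK0 : 0 ≤ K := by simp only [hK]; linarith
    have hdvd : ∀ i, (n:ℤ) ∣ (d i - c - r i) := by
      intro i; simp only [hr]; exact Int.dvd_self_sub_of_emod_eq rfl
    have hKdvd : (n:ℤ) ∣ K - (n:ℤ) * c := by
      have : K - (n:ℤ) * c = ∑ i, (d i - c - r i) := by
        rw [Finset.sum_sub_distrib, Finset.sum_sub_distrib, Finset.sum_const, Finset.card_univ,
          Fintype.card_fin, hK]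
        unfold deg; push_cast; ring
      rw [this]
      exact Finset.dvd_sum (fun i _ => hdvd i)
    have hKdvd' : (n:ℤ) ∣ K := by
      have := dvd_add hKdvd (Dvd.intro c rfl)
      simpa using this
    -- d' := r + K at coordinate 0
    set i0 : Fin n := ⟨0, hn⟩ with hi0
    set d' : Fin n → ℤ := fun i => r i + if i = i0 then K else 0 with hd'
    have hd'nn : ∀ i, 0 ≤ d' i := by
      intro i
      have h1 : 0 ≤ r i := Int.emod_nonneg _ hn0
      by_cases h : i = i0
      · subst h; simp only [hd', if_true]; linarith
      · simp [hd', h, h1]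
    refine ⟨d', hd'nn, ?_⟩
    have hvsum : ∑ i, (d i - d' i) = 0 := by
      have : ∑ i, (d i - d' i) = deg d - ∑ i, r i - K := by
        unfold deg
        rw [Finset.sum_sub_distrib]
        simp only [hd']
        rw [Finset.sum_add_distrib, Finset.sum_ite_eq' Finset.univ i0 (fun _ => K)]
        simp; ring
      rw [this, hK]; ring
    have hvdvd : ∀ i, (n:ℤ) ∣ ((d i - d' i) - c) := by
      intro i
      by_cases h : i = i0
      · subst h
        have : d i0 - d' i0 - c = (d i0 - c - r i0) - K := by simp [hd']; ring
        rw [this]; exact dvd_sub (hdvd i0) hKdvd'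
      · have : d i - d' i - c = d i - c - r i := by simp [hd', h]; ring
        rw [this]; exact hdvd i
    exact lap_witness hn _ c hvsum hvdvd
  · rintro h ⟨d', hd'pos, x, hx⟩
    have hS : ∑ i, (d i - d' i) = 0 := by
      rw [Finset.sum_congr rfl (fun i (_ : i ∈ Finset.univ) => hx i), Finset.sum_sub_distrib,
        Finset.sum_const, Finset.card_univ, Fintype.card_fin, ← Finset.mul_sum]
      push_cast; ring
    have hdeg : deg d = deg d' := by
      unfold deg
      have := hS
      rw [Finset.sum_sub_distrib] at this
      linarith
    have key : ∀ i, (d i - (- ∑ j, x j)) % (n:ℤ) ≤ d' i := by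
      intro i
      have h1 : d i - (- ∑ j, x j) = d' i + (n:ℤ) * x i := by linarith [hx i]
      have h2 : (d i - (- ∑ j, x j)) % (n:ℤ) = d' i % (n:ℤ) := by
        rw [h1]; exact Int.add_mul_emod_self_left ..
      rw [h2, Int.emod_def]
      have : 0 ≤ d' i / (n:ℤ) := Int.ediv_nonneg (hd'pos i) (le_of_lt hn')
      nlinarith
    have := h (- ∑ j, x j)
    have hsum : ∑ i, (d i - (- ∑ j, x j)) % (n:ℤ) ≤ ∑ i, d' i :=
      Finset.sum_le_sum (fun i _ => key i)
    have : deg d < deg d' := lt_of_lt_of_le this hsum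
    omega
/-- a single-coordinate move -/
def move (q : Fin n → ℤ) (i : Fin n) (d : ℤ) : Fin n → ℤ := fun j => q j + if j = i then d else 0

lemma move_apply_self (q : Fin n → ℤ) (i : Fin n) (d : ℤ) : move q i d i = q i + d := by
  simp [move]

lemma move_apply_ne (q : Fin n → ℤ) {i j : Fin n} (d : ℤ) (h : j ≠ i) : move q i d j = q j := by
  simp [move, h]

lemma deg_move (q : Fin n → ℤ) (i : Fin n) (d : ℤ) : deg (move q i d) = deg q + d := by
  unfold deg move
  rw [Finset.sum_add_distrib, Finset.sum_ite_eq' Finset.univ i (fun _ => d)]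
  simp

lemma sum_emod_move (q : Fin n → ℤ) (i : Fin n) (d c : ℤ) :
    ∑ j, (move q i d j - c) % (n:ℤ)
      = (∑ j, (q j - c) % (n:ℤ)) + ((q i + d - c) % (n:ℤ) - (q i - c) % (n:ℤ)) := by
  have : ∀ j : Fin n, (move q i d j - c) % (n:ℤ)
      = (q j - c) % (n:ℤ) + (if j = i then ((q i + d - c) % (n:ℤ) - (q i - c) % (n:ℤ)) else 0) := by
    intro j
    by_cases h : j = i
    · subst h; simp [move]
    · simp [move, h]
  rw [Finset.sum_congr rfl (fun j _ => this j), Finset.sum_add_distrib,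
    Finset.sum_ite_eq' Finset.univ i]
  simp



lemma card_univ_fin (n : ℕ) : (Finset.univ : Finset (Fin n)).card = n := by
  simp

/-- lifting the i2 coordinate by one stays in N, provided slack at the critical residues -/
lemma lift_one (hn1 : (1:ℤ) < n) (q : Fin n → ℤ) (i2 : Fin n) (hq : P n q)
    (hbig : ∀ c : ℤ, (n:ℤ) ∣ (q i2 + 1 - c) → deg q + n < ∑ j, (q j - c) % (n:ℤ)) :
    P n (move q i2 1) := by
  intro c
  rw [sum_emod_move, deg_move]
  have hb := bump hn1 (q i2 + 1 - c)
  have he : q i2 + 1 - c - 1 = q i2 - c := by ring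
  rw [he] at hb
  by_cases hd : (n:ℤ) ∣ (q i2 + 1 - c)
  · rw [if_pos hd] at hb
    have := hbig c hd
    linarith
  · rw [if_neg hd] at hb
    have := hq c
    linarith

/-- find a coordinate congruent to c when there is no slack at c -/
lemma exists_coord (hn1 : (1:ℤ) < n) (q : Fin n → ℤ) (hq : P n q) (c : ℤ)
    (hsm : ∑ j, (q j - c) % (n:ℤ) ≤ deg q + n) :
    ∃ i, (n:ℤ) ∣ (q i - c) := by
  by_contra hcon
  push_neg at hcon
  have key : ∀ i : Fin n, (q i - (c+1)) % (n:ℤ) = (q i - c) % (n:ℤ) - 1 := by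
    intro i
    have hb := bump hn1 (q i - c)
    rw [if_neg (hcon i)] at hb
    have he : q i - c - 1 = q i - (c+1) := by ring
    rw [he] at hb
    linarith
  have hsum : ∑ j, (q j - (c+1)) % (n:ℤ) = (∑ j, (q j - c) % (n:ℤ)) - n := by
    rw [Finset.sum_congr rfl (fun j _ => key j), Finset.sum_sub_distrib, Finset.sum_const,
      card_univ_fin]
    simp
  have := hq (c + 1)
  rw [hsum] at this
  linarith

lemma climb (hn : 2 ≤ n) (b : Fin n → ℤ) (i2 : Fin n) (hb2 : b i2 = -1)
    (hB : deg b + 2*(n:ℤ) ≤ ∑ i, (b i - 0) % (n:ℤ)) :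
    ∀ k : ℕ, ∀ q : Fin n → ℤ, P n q → (∀ i, q i ≤ b i) → q i2 = -(1:ℤ) - k →
      ∃ r, P n r ∧ (∀ i, r i ≤ b i + (if i = i2 then 1 else 0)) ∧ deg r = deg q + 1 := by
  have hn1 : (1:ℤ) < n := by exact_mod_cast hn
  have hn0 : 0 < n := by omega
  intro k
  induction k with
  | zero =>
    intro q hq hqb hq2
    push_cast at hq2
    refine ⟨move q i2 1, ?_, ?_, deg_move q i2 1⟩
    · refine lift_one hn1 q i2 hq ?_
      intro c hdvd
      have hdvd' : (n:ℤ) ∣ (c - 0) := by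
        have : c - 0 = -(q i2 + 1 - c) := by rw [hq2]; ring
        rw [this]; exact dvd_neg.mpr hdvd
      have hcongr : ∀ x : ℤ, (x - c) % (n:ℤ) = (x - 0) % (n:ℤ) := sub_emod_congr c 0 hdvd'
      rw [Finset.sum_congr rfl (fun j _ => hcongr (q j))]
      have := g_mono hn0 hqb (0:ℤ)
      linarith
    · intro i
      by_cases h : i = i2
      · rw [h, move_apply_self, if_pos rfl]; linarith [hqb i2]
      · rw [move_apply_ne _ _ h]; simpa [h] using hqb i
  | succ k ih =>
    intro q hq hqb hq2
    push_cast at hq2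
    by_cases hbig : ∀ c : ℤ, (n:ℤ) ∣ (q i2 + 1 - c) → deg q + n < ∑ j, (q j - c) % (n:ℤ)
    · refine ⟨move q i2 1, lift_one hn1 q i2 hq hbig, ?_, deg_move q i2 1⟩
      intro i
      by_cases h : i = i2
      · rw [h, move_apply_self, if_pos rfl, hb2, hq2]; push_cast; linarith
      · rw [move_apply_ne _ _ h]; simpa [h] using hqb i
    · push_neg at hbig
      obtain ⟨c, hdvdc, hsm⟩ := hbig
      obtain ⟨i, hi⟩ := exists_coord hn1 q hq c hsm
      have hii2 : i ≠ i2 := by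
        intro h
        rw [h] at hi
        have h1 : (n:ℤ) ∣ 1 := by
          have hd2 := dvd_sub hdvdc hi
          have e : q i2 + 1 - c - (q i2 - c) = 1 := by ring
          rwa [e] at hd2
        have := Int.le_of_dvd one_pos h1
        linarith
      -- q' = move (move q i2 1) i (-1)
      set q1 : Fin n → ℤ := move q i2 1 with hq1
      set q' : Fin n → ℤ := move q1 i (-1) with hq'
      have hq1i : q1 i = q i := move_apply_ne _ _ hii2
      have hq'i2 : q' i2 = q i2 + 1 := by
        rw [hq', move_apply_ne _ _ (Ne.symm hii2), hq1, move_apply_self]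
      have hdeg' : deg q' = deg q := by rw [hq', deg_move, hq1, deg_move]; ring
      have hq'P : P n q' := by
        intro c'
        have hs : ∑ j, (q' j - c') % (n:ℤ)
            = (∑ j, (q j - c') % (n:ℤ))
              + ((q i2 + 1 - c') % (n:ℤ) - (q i2 - c') % (n:ℤ))
              + ((q i - 1 - c') % (n:ℤ) - (q i - c') % (n:ℤ)) := by
          rw [hq', sum_emod_move, hq1i, hq1, sum_emod_move]
          rw [show q i + -1 - c' = q i - 1 - c' by ring]
        have hb1 := bump hn1 (q i2 + 1 - c')
        have he1 : q i2 + 1 - c' - 1 = q i2 - c' := by ring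
        rw [he1] at hb1
        have hb2' := bump hn1 (q i - c')
        have he2 : q i - c' - 1 = q i - 1 - c' := by ring
        rw [he2] at hb2'
        have hiff : ((n:ℤ) ∣ (q i2 + 1 - c')) ↔ ((n:ℤ) ∣ (q i - c')) := by
          constructor
          · intro h
            have : q i - c' = (q i - c) - (q i2 + 1 - c) + (q i2 + 1 - c') := by ring
            rw [this]; exact dvd_add (dvd_sub hi hdvdc) h
          · intro h
            have : q i2 + 1 - c' = (q i2 + 1 - c) - (q i - c) + (q i - c') := by ring
            rw [this]; exact dvd_add (dvd_sub hdvdc hi) h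
        have hqc' := hq c'
        by_cases hd : (n:ℤ) ∣ (q i2 + 1 - c')
        · rw [if_pos hd] at hb1
          rw [if_pos (hiff.mp hd)] at hb2'
          rw [hs, hdeg']; linarith
        · rw [if_neg hd] at hb1
          rw [if_neg (fun h => hd (hiff.mpr h))] at hb2'
          rw [hs, hdeg']; linarith
      have hq'b : ∀ j, q' j ≤ b j := by
        intro j
        by_cases h1 : j = i2
        · subst h1; rw [hq'i2, hq2, hb2]; push_cast; linarith
        · by_cases h2 : j = i
          · subst h2
            rw [hq', move_apply_self, hq1i]
            linarith [hqb j]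
          · rw [hq', move_apply_ne _ _ h2, hq1, move_apply_ne _ _ h1]
            exact hqb j
      have hq'2 : q' i2 = -(1:ℤ) - k := by rw [hq'i2, hq2]; push_cast; ring
      obtain ⟨r, hr1, hr2, hr3⟩ := ih q' hq'P hq'b hq'2
      exact ⟨r, hr1, hr2, by rw [hr3, hdeg']⟩

lemma swap_down (hn : 0 < n) (a q : Fin n → ℤ) (i2 : Fin n) (ha2 : a i2 = 0)
    (hq : P n q) (hle : ∀ i, q i ≤ a i) (hq2 : q i2 = 0)
    (hga : ∑ i, (a i - 0) % (n:ℤ) ≤ deg a) :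
    ∃ r, P n r ∧ (∀ i, r i ≤ a i - (if i = i2 then 1 else 0)) ∧ deg r = deg q := by
  have hn' : (0:ℤ) < n := by exact_mod_cast hn
  have hstrict : ∑ i, ((a i - 0) % (n:ℤ) - a i) < ∑ i, ((q i - 0) % (n:ℤ) - q i) := by
    have h1 := g_mono hn hle (0:ℤ)
    have h2 := hq 0
    rw [Finset.sum_sub_distrib, Finset.sum_sub_distrib]
    have ha' : deg a = ∑ i, a i := rfl
    have hq' : deg q = ∑ i, q i := rfl
    omega
  obtain ⟨i, _, hi⟩ := Finset.exists_lt_of_sum_lt hstrict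
  have hdivlt : q i / (n:ℤ) < a i / (n:ℤ) := by
    have e1 : (a i - 0) % (n:ℤ) = a i - 0 - (n:ℤ) * ((a i - 0)/(n:ℤ)) := Int.emod_def _ _
    have e2 : (q i - 0) % (n:ℤ) = q i - 0 - (n:ℤ) * ((q i - 0)/(n:ℤ)) := Int.emod_def _ _
    simp only [sub_zero] at hi
    have : (n:ℤ) * (q i / (n:ℤ)) < (n:ℤ) * (a i / (n:ℤ)) := by
      rw [sub_zero] at e1 e2; rw [e1, e2] at hi; linarith
    exact lt_of_mul_lt_mul_left this (le_of_lt hn')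
  set A : ℤ := (n:ℤ) * (a i / (n:ℤ)) with hA
  have hqiA : q i < A := by
    have h1 : q i % (n:ℤ) < n := Int.emod_lt_of_pos _ hn'
    have h2 : q i % (n:ℤ) = q i - (n:ℤ) * (q i / (n:ℤ)) := Int.emod_def _ _
    have h3 : (n:ℤ) * (q i / (n:ℤ) + 1) ≤ (n:ℤ) * (a i / (n:ℤ)) :=
      mul_le_mul_of_nonneg_left (by omega) (le_of_lt hn')
    have h4 : (n:ℤ) * (q i / (n:ℤ) + 1) = (n:ℤ) * (q i / (n:ℤ)) + n := by ring
    omega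
  have hAa : A ≤ a i := by
    have h2 : a i % (n:ℤ) = a i - (n:ℤ) * (a i / (n:ℤ)) := Int.emod_def _ _
    have h1 : 0 ≤ a i % (n:ℤ) := Int.emod_nonneg _ (ne_of_gt hn')
    omega
  have hii2 : i ≠ i2 := by
    intro h
    rw [h, hq2, ha2] at hdivlt
    exact lt_irrefl _ hdivlt
  set q1 : Fin n → ℤ := move q i (A - q i) with hq1
  set r : Fin n → ℤ := move q1 i2 (q i - A) with hr
  have hq1i2 : q1 i2 = 0 := by rw [hq1, move_apply_ne _ _ (Ne.symm hii2), hq2]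
  have hri : r i = A := by
    rw [hr, move_apply_ne _ _ hii2, hq1, move_apply_self]; ring
  have hri2 : r i2 = q i - A := by rw [hr, move_apply_self, hq1i2]; ring
  have hdeg : deg r = deg q := by rw [hr, deg_move, hq1, deg_move]; ring
  have hrP : P n r := by
    intro c
    have hs : ∑ j, (r j - c) % (n:ℤ)
        = (∑ j, (q j - c) % (n:ℤ))
          + ((A - c) % (n:ℤ) - (q i - c) % (n:ℤ))
          + ((q i - A - c) % (n:ℤ) - (0 - c) % (n:ℤ)) := by
      rw [hr, sum_emod_move, hq1i2, hq1, sum_emod_move]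
      have e1 : q i + (A - q i) - c = A - c := by ring
      have e2 : (0:ℤ) + (q i - A) - c = q i - A - c := by ring
      rw [e1, e2]
    have e3 : (A - c) % (n:ℤ) = (0 - c) % (n:ℤ) := by
      have : A - c = 0 - c + (n:ℤ) * (a i / (n:ℤ)) := by rw [hA]; ring
      rw [this, Int.add_mul_emod_self_left]
    have e4 : (q i - A - c) % (n:ℤ) = (q i - c) % (n:ℤ) := by
      have : q i - A - c = q i - c + (n:ℤ) * (-(a i / (n:ℤ))) := by rw [hA]; ring
      rw [this, Int.add_mul_emod_self_left]
    rw [hs, e3, e4, hdeg]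
    have := hq c
    linarith
  refine ⟨r, hrP, ?_, hdeg⟩
  intro j
  by_cases h1 : j = i2
  · rw [h1, hri2, if_pos rfl, ha2]; omega
  · by_cases h2 : j = i
    · rw [h2, hri, if_neg (by rw [h2] at h1; exact h1)]; omega
    · rw [hr, move_apply_ne _ _ h1, hq1, move_apply_ne _ _ h2, if_neg h1]
      simpa using hle j

lemma emod_le_self (hn' : (0:ℤ) < n) {x : ℤ} (hx : 0 ≤ x) : x % (n:ℤ) ≤ x := by
  have h1 := Int.emod_def x (n:ℤ)
  have h2 := Int.ediv_nonneg hx (le_of_lt hn')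
  nlinarith

lemma le_emod_self (hn' : (0:ℤ) < n) {x : ℤ} (hx : x ≤ (n:ℤ) - 1) : x ≤ x % (n:ℤ) := by
  by_cases h : 0 ≤ x
  · rw [Int.emod_eq_of_lt h (by omega)]
  · have := Int.emod_nonneg x (ne_of_gt hn')
    omega

lemma neg_emod_big (hn' : (0:ℤ) < n) {x : ℤ} (hx : x < 0) : x + (n:ℤ) ≤ x % (n:ℤ) := by
  have h1 := Int.emod_def x (n:ℤ)
  have h2 : x / (n:ℤ) < 0 := Int.ediv_neg_of_neg_of_pos hx hn'
  have h3 : x / (n:ℤ) ≤ -1 := by omega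
  nlinarith

lemma neg_one_emod (hn' : (1:ℤ) < n) : (-1 : ℤ) % (n:ℤ) = (n:ℤ) - 1 := by
  have hb := bump hn' (0:ℤ)
  have h0 : (0:ℤ) % (n:ℤ) = 0 := by simp
  have he : (0:ℤ) - 1 = -1 := by ring
  rw [he, h0, if_pos (dvd_zero _)] at hb
  linarith

lemma sum_natAbs_of_le {d q : Fin n → ℤ} (h : ∀ i, q i ≤ d i) :
    ((∑ i, (d i - q i).natAbs : ℕ) : ℤ) = deg d - deg q := by
  push_cast
  rw [Finset.sum_congr rfl (fun i (_ : i ∈ Finset.univ) =>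
    abs_of_nonneg (by linarith [h i] : (0:ℤ) ≤ d i - q i))]
  rw [Finset.sum_sub_distrib]
  rfl

lemma distTo_le {d p : Fin n → ℤ} (hp : p ∈ NKn n) :
    distTo (NKn n) d ≤ ∑ i, (d i - p i).natAbs :=
  Nat.sInf_le ⟨p, hp, rfl⟩

lemma exists_min (hn : 0 < n) (d : Fin n → ℤ) :
    ∃ p ∈ NKn n, ∑ i, (d i - p i).natAbs = distTo (NKn n) d := by
  have hmem : (fun _ : Fin n => (-1 : ℤ)) ∈ NKn n := by
    rw [mem_NKn hn]
    intro c
    have h1 : deg (fun _ : Fin n => (-1 : ℤ)) = -(n:ℤ) := by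
      unfold deg
      rw [Finset.sum_const, Finset.card_univ, Fintype.card_fin]
      push_cast; ring
    have h2 : (0:ℤ) ≤ ∑ i : Fin n, ((-1 : ℤ) - c) % (n:ℤ) :=
      Finset.sum_nonneg (fun i _ => Int.emod_nonneg _ (by exact_mod_cast hn.ne'))
    rw [h1]
    have : (0:ℤ) < n := by exact_mod_cast hn
    linarith
  have hne : {k : ℕ | ∃ d' ∈ NKn n, ∑ i, (d i - d' i).natAbs = k}.Nonempty :=
    ⟨_, ⟨_, hmem, rfl⟩⟩
  obtain ⟨p, hp, hpk⟩ := Nat.sInf_mem hne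
  exact ⟨p, hp, hpk⟩

end S18

set_option maxHeartbeats 1000000 in
open S18 in
theorem stmt18 {n : ℕ} (hn : 2 ≤ n) (a : Fin n → ℤ)
    (hA1 : ∀ j : Fin n, (j : ℕ) < n - 2 → 0 ≤ a j ∧ a j ≤ (n : ℤ) - 1)
    (hA2 : a ⟨n - 2, by omega⟩ = 0) :
    (∑ j ∈ Finset.univ.filter (fun j : Fin n => (j : ℕ) < n - 2), a j) ≤ deg a ↔
      rBN n a = rBN n (a - stdB ⟨n - 2, by omega⟩) + 1 := by
  have hn0 : 0 < n := by omega
  have hn' : (0:ℤ) < n := by exact_mod_cast hn0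
  have hn1 : (1:ℤ) < n := by exact_mod_cast hn
  set i2 : Fin n := ⟨n - 2, by omega⟩ with hi2
  set i1 : Fin n := ⟨n - 1, by omega⟩ with hi1
  have hi2v : (i2 : ℕ) = n - 2 := rfl
  have hi1v : (i1 : ℕ) = n - 1 := rfl
  have ha2 : a i2 = 0 := hA2
  have hi12 : i1 ≠ i2 := by
    intro h
    have h2 := congrArg Fin.val h
    rw [hi1v, hi2v] at h2
    omega
  set m : ℤ := a i1 with hm
  set b : Fin n → ℤ := S18.move a i2 (-1) with hb
  have hab : a - stdB i2 = b := by
    funext j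
    by_cases h : j = i2
    · simp only [Pi.sub_apply, stdB, S18.move, hb, h, if_true]; ring
    · simp [Pi.sub_apply, stdB, S18.move, hb, h]
  have hbi2 : b i2 = -1 := by rw [hb, S18.move_apply_self, ha2]; ring
  have hbj : ∀ j, j ≠ i2 → b j = a j := fun j h => S18.move_apply_ne _ _ h
  have hdegb : deg b = deg a - 1 := by rw [hb, S18.deg_move]; ring
  have hclass : ∀ j : Fin n, (j:ℕ) < n - 2 ∨ j = i2 ∨ j = i1 := by
    intro j
    have hj := j.isLt
    by_cases h : (j:ℕ) < n - 2
    · exact Or.inl h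
    · rcases (by omega : (j:ℕ) = n - 2 ∨ (j:ℕ) = n - 1) with h1 | h1
      · exact Or.inr (Or.inl (Fin.ext (by rw [h1, hi2v])))
      · exact Or.inr (Or.inr (Fin.ext (by rw [h1, hi1v])))
  -- LHS iff 0 ≤ m
  have hLHS : ((∑ j ∈ Finset.univ.filter (fun j : Fin n => (j : ℕ) < n - 2), a j) ≤ deg a)
      ↔ 0 ≤ m := by
    have hsplit : deg a = (∑ j ∈ Finset.univ.filter (fun j : Fin n => (j : ℕ) < n - 2), a j)
        + (∑ j ∈ Finset.univ.filter (fun j : Fin n => ¬ (j : ℕ) < n - 2), a j) :=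
      (Finset.sum_filter_add_sum_filter_not _ _ _).symm
    have hset : Finset.univ.filter (fun j : Fin n => ¬ (j : ℕ) < n - 2) = {i2, i1} := by
      ext j
      simp only [Finset.mem_filter, Finset.mem_univ, true_and, Finset.mem_insert,
        Finset.mem_singleton]
      constructor
      · intro h
        rcases hclass j with h1 | h1 | h1
        · exact absurd h1 h
        · exact Or.inl h1
        · exact Or.inr h1
      · rintro (h | h) <;> subst h <;> omega
    have hpair : (∑ j ∈ ({i2, i1} : Finset (Fin n)), a j) = a i2 + a i1 :=
      Finset.sum_pair (Ne.symm hi12)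
    rw [hsplit, hset, hpair, ha2]
    omega
  rw [hLHS, hab]
  set D1 := distTo (NKn n) a with hD1
  set D2 := distTo (NKn n) b with hD2
  have hgoal : (rBN n a = rBN n b + 1) ↔ (D1 = D2 + 1) := by
    unfold rBN
    rw [← hD1, ← hD2]
    omega
  rw [hgoal]
  have hbcases : ∀ i : Fin n, b i = a i ∨ (b i = a i - 1 ∧ i = i2) := by
    intro i
    by_cases h : i = i2
    · right; refine ⟨?_, h⟩; rw [h, hbi2, ha2]; ring
    · left; exact hbj i h
  -- inequality (I) : D2 ≤ D1
  have hI : D2 ≤ D1 := by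
    obtain ⟨p, hpN, hpd⟩ := exists_min hn0 a
    obtain ⟨q, hqmin⟩ : ∃ q : Fin n → ℤ, ∀ i, q i = min (p i) (b i) :=
      ⟨fun i => min (p i) (b i), fun _ => rfl⟩
    have hqN : q ∈ NKn n :=
      (mem_NKn hn0 q).mpr (P_mono hn0
        (fun i => by rw [hqmin i]; exact min_le_left _ _) ((mem_NKn hn0 p).mp hpN))
    have h1 : D2 ≤ ∑ i, (b i - q i).natAbs := distTo_le hqN
    have h2 : ∑ i, (b i - q i).natAbs ≤ ∑ i, (a i - p i).natAbs := by
      apply Finset.sum_le_sum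
      intro i _
      have hqi := hqmin i
      rcases hbcases i with h | ⟨h, _⟩ <;> omega
    rw [hpd] at h2
    omega
  -- inequality (II) : D1 ≤ D2 + 1
  have hII : D1 ≤ D2 + 1 := by
    obtain ⟨p, hpN, hpd⟩ := exists_min hn0 b
    obtain ⟨q, hqmin⟩ : ∃ q : Fin n → ℤ, ∀ i, q i = min (p i) (a i) :=
      ⟨fun i => min (p i) (a i), fun _ => rfl⟩
    have hqN : q ∈ NKn n :=
      (mem_NKn hn0 q).mpr (P_mono hn0
        (fun i => by rw [hqmin i]; exact min_le_left _ _) ((mem_NKn hn0 p).mp hpN))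
    have h1 : D1 ≤ ∑ i, (a i - q i).natAbs := distTo_le hqN
    have h2 : ∑ i, (a i - q i).natAbs
        ≤ ∑ i, ((b i - p i).natAbs + (if i = i2 then 1 else 0)) := by
      apply Finset.sum_le_sum
      intro i _
      have hqi := hqmin i
      rcases hbcases i with h | ⟨h, h'⟩
      · have hne : ¬ i = i2 := by
          intro hc; rw [hc, hbi2, ha2] at h; omega
        rw [if_neg hne]; omega
      · rw [if_pos h']; omega
    have h3 : ∑ i, ((b i - p i).natAbs + (if i = i2 then 1 else 0))
        = (∑ i, (b i - p i).natAbs) + 1 := by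
      rw [Finset.sum_add_distrib, Finset.sum_ite_eq' Finset.univ i2 (fun _ => 1)]
      simp
    rw [h3, hpd] at h2
    omega
  constructor
  · intro hm0
    -- inequality (III) : D2 + 1 ≤ D1, assuming 0 ≤ m
    have hIII : D2 + 1 ≤ D1 := by
      have hm0' : (0:ℤ) ≤ a i1 := hm0
      have hapos : ∀ j, 0 ≤ a j := by
        intro j
        rcases hclass j with h | h | h
        · exact (hA1 j h).1
        · rw [h, ha2]
        · rw [h]; exact hm0'
      have hga : ∑ i, (a i - 0) % (n:ℤ) ≤ deg a := by
        have key : ∀ i : Fin n, (a i - 0) % (n:ℤ) ≤ a i := by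
          intro i; rw [sub_zero]; exact emod_le_self hn' (hapos i)
        calc ∑ i, (a i - 0) % (n:ℤ) ≤ ∑ i, a i := Finset.sum_le_sum (fun i _ => key i)
          _ = deg a := rfl
      have hnPa : ¬ P n a := fun hP => absurd (hP 0) (not_lt.mpr hga)
      obtain ⟨p, hpN, hpd⟩ := exists_min hn0 a
      obtain ⟨q, hqmin⟩ : ∃ q : Fin n → ℤ, ∀ i, q i = min (p i) (a i) :=
        ⟨fun i => min (p i) (a i), fun _ => rfl⟩
      have hqa : ∀ i, q i ≤ a i := fun i => by rw [hqmin i]; exact min_le_right _ _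
      have hqP : P n q := P_mono hn0
        (fun i => by rw [hqmin i]; exact min_le_left _ _) ((mem_NKn hn0 p).mp hpN)
      have hT2 : ∑ i, (a i - q i).natAbs ≤ ∑ i, (a i - p i).natAbs := by
        apply Finset.sum_le_sum
        intro i _
        have hqi := hqmin i
        omega
      have hT1 : 1 ≤ ∑ i, (a i - q i).natAbs := by
        by_contra hcon
        push_neg at hcon
        have hz : ∑ i, (a i - q i).natAbs = 0 := by omega
        have hall : ∀ i ∈ Finset.univ, (a i - q i).natAbs = 0 :=
          Finset.sum_eq_zero_iff.mp hz
        have hqa' : q = a := by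
          funext i
          have := hall i (Finset.mem_univ i)
          omega
        rw [hqa'] at hqP
        exact hnPa hqP
      have hTZ : ((∑ i, (a i - q i).natAbs : ℕ) : ℤ) = deg a - deg q := sum_natAbs_of_le hqa
      by_cases hc : q i2 = 0
      · obtain ⟨r, hrP, hrle, hrdeg⟩ := swap_down hn0 a q i2 ha2 hqP hqa hc hga
        have hrb : ∀ i, r i ≤ b i := by
          intro i
          have hri := hrle i
          rcases hbcases i with h | ⟨h, h'⟩
          · have hne : ¬ i = i2 := by
              intro hcon; rw [hcon, hbi2, ha2] at h; omega
            rw [if_neg hne] at hri; omega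
          · rw [if_pos h'] at hri; omega
        have hD2le : D2 ≤ ∑ i, (b i - r i).natAbs := distTo_le ((mem_NKn hn0 r).mpr hrP)
        have h3 : ((∑ i, (b i - r i).natAbs : ℕ) : ℤ) = deg b - deg r := sum_natAbs_of_le hrb
        omega
      · have hqi2 : q i2 ≤ -1 := by
          have h1 : q i2 ≤ a i2 := hqa i2
          rw [ha2] at h1
          omega
        have hqb : ∀ i, q i ≤ b i := by
          intro i
          rcases hbcases i with h | ⟨h, h'⟩
          · rw [h]; exact hqa i
          · rw [h', hbi2]; exact hqi2
        have hD2le : D2 ≤ ∑ i, (b i - q i).natAbs := distTo_le ((mem_NKn hn0 q).mpr hqP)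
        have h3 : ((∑ i, (b i - q i).natAbs : ℕ) : ℤ) = deg b - deg q := sum_natAbs_of_le hqb
        omega
    omega
  · intro hEq
    by_contra hneg
    push_neg at hneg
    -- inequality (IV) : D1 ≤ D2, given m < 0
    have hIV : D1 ≤ D2 := by
      have hmneg : a i1 < 0 := hneg
      have hgnn : ∀ j : Fin n, 0 ≤ (b j - 0) % (n:ℤ) - b j := by
        intro j
        rw [sub_zero]
        rcases hclass j with h | h | h
        · have hj2 : j ≠ i2 := by
            intro hcon
            have h2 := congrArg Fin.val hcon
            rw [hi2v] at h2
            omega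
          rw [hbj j hj2]
          have hub := (hA1 j h).2
          linarith [le_emod_self hn' hub]
        · rw [h, hbi2, neg_one_emod hn1]; linarith
        · rw [h, hbj i1 hi12]
          have hnn := Int.emod_nonneg (a i1) (ne_of_gt hn')
          omega
      have hB : deg b + 2*(n:ℤ) ≤ ∑ i, (b i - 0) % (n:ℤ) := by
        have hsub : ({i2, i1} : Finset (Fin n)) ⊆ Finset.univ := Finset.subset_univ _
        have hkey : ∑ j ∈ ({i2, i1} : Finset (Fin n)), ((b j - 0) % (n:ℤ) - b j)
            ≤ ∑ j, ((b j - 0) % (n:ℤ) - b j) :=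
          Finset.sum_le_sum_of_subset_of_nonneg hsub (fun j _ _ => hgnn j)
        have hpair : ∑ j ∈ ({i2, i1} : Finset (Fin n)), ((b j - 0) % (n:ℤ) - b j)
            = ((b i2 - 0) % (n:ℤ) - b i2) + ((b i1 - 0) % (n:ℤ) - b i1) :=
          Finset.sum_pair (Ne.symm hi12)
        have h2 : (b i2 - 0) % (n:ℤ) - b i2 = n := by
          rw [hbi2]
          have he : (-1 - 0 : ℤ) = -1 := by ring
          rw [he, neg_one_emod hn1]; ring
        have h1 : (n:ℤ) ≤ (b i1 - 0) % (n:ℤ) - b i1 := by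
          rw [hbj i1 hi12, sub_zero]
          have := neg_emod_big hn' hmneg
          linarith
        have h4 : ∑ j, ((b j - 0) % (n:ℤ) - b j) = (∑ j, (b j - 0) % (n:ℤ)) - deg b := by
          rw [Finset.sum_sub_distrib]; rfl
        rw [h4, hpair] at hkey
        linarith
      obtain ⟨p, hpN, hpd⟩ := exists_min hn0 b
      obtain ⟨q, hqmin⟩ : ∃ q : Fin n → ℤ, ∀ i, q i = min (p i) (b i) :=
        ⟨fun i => min (p i) (b i), fun _ => rfl⟩
      have hqb : ∀ i, q i ≤ b i := fun i => by rw [hqmin i]; exact min_le_right _ _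
      have hqP : P n q := P_mono hn0
        (fun i => by rw [hqmin i]; exact min_le_left _ _) ((mem_NKn hn0 p).mp hpN)
      have hqi2 : q i2 ≤ -1 := by
        have := hqb i2; rw [hbi2] at this; exact this
      obtain ⟨k, hqk⟩ : ∃ k : ℕ, q i2 = -(1:ℤ) - k :=
        ⟨(-(1:ℤ) - q i2).toNat, by omega⟩
      obtain ⟨r, hrP, hrle, hrdeg⟩ := climb hn b i2 hbi2 hB k q hqP hqb hqk
      have hra : ∀ i, r i ≤ a i := by
        intro i
        have hri := hrle i
        rcases hbcases i with h | ⟨h, h'⟩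
        · have hne : ¬ i = i2 := by
            intro hcon; rw [hcon, hbi2, ha2] at h; omega
          rw [if_neg hne] at hri; omega
        · rw [if_pos h'] at hri; omega
      have hD1le : D1 ≤ ∑ i, (a i - r i).natAbs := distTo_le ((mem_NKn hn0 r).mpr hrP)
      have h3 : ((∑ i, (a i - r i).natAbs : ℕ) : ℤ) = deg a - deg r := sum_natAbs_of_le hra
      have h4 : ∑ i, (b i - q i).natAbs ≤ ∑ i, (b i - p i).natAbs := by
        apply Finset.sum_le_sum
        intro i _
        have hqi := hqmin i
        omega
      have h5 : ((∑ i, (b i - q i).natAbs : ℕ) : ℤ) = deg b - deg q := sum_natAbs_of_le hqb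
      rw [hpd] at h4
      omega
    omega
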